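/- Let φ : U → ℝ^d be a C² map on an open set U ⊆ ℝ^d whose Jacobian matrix Dφ(x) is invertible with positive determinant for all x ∈ U, and let h : U → ℝ^d be a C¹ vector field. Then for every x ∈ U: trace( D[ Dφ(x) h(x) ] · (Dφ(x))^{-1} ) = h(x) · ∇ log det Dφ(x) + div h(x), where D[Dφ h] is the Jacobian matrix of the map x ↦ Dφ(x)h(x), ∇ log det Dφ is the gradient of x ↦ log det Dφ(x), and div h = trace(Dh). -/

import Mathlib

open MeasureTheory Set Filter
open scoped RealInnerProductSpace BigOperators Topology

noncomputable section

abbrev Euc (d : ℕ) := EuclideanSpace ℝ (Fin d)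

/-- Divergence of a vector field: the trace of its Jacobian. -/
def divg {d : ℕ} (f : Euc d → Euc d) (x : Euc d) : ℝ :=
  LinearMap.trace ℝ (Euc d) (fderiv ℝ f x : Euc d →ₗ[ℝ] Euc d)


/-! Auxiliary material -/

open Matrix in
lemma det_bound_aux {d : ℕ} (m : Fin d → Fin d → ℝ) :
    ‖Matrix.det (Matrix.of m)‖ ≤ (d.factorial : ℝ) * ∏ i, ‖m i‖ := by
  rw [Matrix.det_apply]
  refine (norm_sum_le _ _).trans ?_
  have hterm : ∀ σ : Equiv.Perm (Fin d),
      ‖Equiv.Perm.sign σ • ∏ i, Matrix.of m (σ i) i‖ ≤ ∏ i, ‖m i‖ := by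
    intro σ
    have h2 : ‖Equiv.Perm.sign σ • ∏ i, Matrix.of m (σ i) i‖ = ‖∏ i, m (σ i) i‖ := by
      rcases Int.units_eq_one_or (Equiv.Perm.sign σ) with hs | hs <;>
        simp [hs, Units.smul_def, Matrix.of_apply]
    rw [h2, ← Equiv.prod_comp σ (fun i => ‖m i‖)]
    calc ‖∏ i, m (σ i) i‖ ≤ ∏ i, ‖m (σ i) i‖ := by
          simp [Real.norm_eq_abs, Finset.abs_prod]
    _ ≤ ∏ i, ‖m (σ i)‖ :=
        Finset.prod_le_prod (fun i _ => norm_nonneg _)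
          (fun i _ => norm_le_pi_norm (m (σ i)) i)
  refine (Finset.sum_le_sum fun σ _ => hterm σ).trans ?_
  rw [Finset.sum_const, Finset.card_univ, Fintype.card_perm, Fintype.card_fin, nsmul_eq_mul]

/-- det as a continuous multilinear map in the rows. -/
def detCM (d : ℕ) : ContinuousMultilinearMap ℝ (fun _ : Fin d => (Fin d → ℝ)) ℝ :=
  MultilinearMap.mkContinuous
    ((Matrix.detRowAlternating : ((Fin d) → ℝ) [⋀^(Fin d)]→ₗ[ℝ] ℝ)).toMultilinearMap
    (d.factorial) (fun m => det_bound_aux m)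

lemma detCM_apply {d : ℕ} (m : Fin d → Fin d → ℝ) : detCM d m = Matrix.det (Matrix.of m) := rfl

lemma hasFDerivAt_detfun {d : ℕ} (M : Fin d → Fin d → ℝ) :
    HasFDerivAt (fun m : Fin d → Fin d → ℝ => Matrix.det (Matrix.of m))
      ((detCM d).linearDeriv M) M := (detCM d).hasFDerivAt M

lemma linearDeriv_det_apply {d : ℕ} (M B : Fin d → Fin d → ℝ) :
    (detCM d).linearDeriv M B = ∑ i, ((Matrix.of M).updateRow i (B i)).det := by
  rw [ContinuousMultilinearMap.linearDeriv_apply]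
  rfl

open Matrix in
lemma sum_det_updateRow {d : ℕ} (M B : Matrix (Fin d) (Fin d) ℝ) :
    ∑ i, (M.updateRow i (B i)).det = (M.adjugate * B).trace := by
  have key : ∀ i, (M.updateRow i (B i)).det = ∑ j, B i j * M.adjugate j i := by
    intro i
    have hb : (B i) = ∑ j, (B i j) • (Pi.single j 1 : Fin d → ℝ) := by
      ext k; simp [Pi.single_apply, eq_comm]
    rw [← Matrix.cramer_transpose_apply M (B i) i]
    conv_lhs => rw [hb]
    rw [map_sum]
    simp only [_root_.map_smul, Finset.sum_apply, Pi.smul_apply, smul_eq_mul]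
    refine Finset.sum_congr rfl fun j _ => ?_
    rw [Matrix.cramer_transpose_apply, ← Matrix.adjugate_apply]
  simp only [key, Matrix.trace, Matrix.diag, Matrix.mul_apply]
  rw [Finset.sum_comm]
  simp [mul_comm]

def bEuc (d : ℕ) : Module.Basis (Fin d) ℝ (Euc d) := (EuclideanSpace.basisFun (Fin d) ℝ).toBasis

/-- The linear map sending a continuous linear endomorphism of `Euc d` to (the pi-type version
of) its matrix. -/
def TLmat (d : ℕ) : (Euc d →L[ℝ] Euc d) →ₗ[ℝ] (Fin d → Fin d → ℝ) where
  toFun L := Matrix.of.symm (LinearMap.toMatrix (bEuc d) (bEuc d) (↑L : Euc d →ₗ[ℝ] Euc d))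
  map_add' L L' := by
    show Matrix.of.symm ((LinearMap.toMatrix (bEuc d) (bEuc d)) (↑L + ↑L')) = _
    rw [map_add]; rfl
  map_smul' c L := by
    show Matrix.of.symm ((LinearMap.toMatrix (bEuc d) (bEuc d))
      (c • (↑L : Euc d →ₗ[ℝ] Euc d))) = _
    rw [_root_.map_smul]; rfl

def TCL (d : ℕ) : (Euc d →L[ℝ] Euc d) →L[ℝ] (Fin d → Fin d → ℝ) :=
  LinearMap.toContinuousLinearMap (TLmat d)

lemma of_TCL (d : ℕ) (L : Euc d →L[ℝ] Euc d) :
    Matrix.of (TCL d L) = LinearMap.toMatrix (bEuc d) (bEuc d) (↑L : Euc d →ₗ[ℝ] Euc d) := rfl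

lemma det_TCL (d : ℕ) (L : Euc d →L[ℝ] Euc d) :
    (Matrix.of (TCL d L)).det = L.det := by
  rw [of_TCL, LinearMap.det_toMatrix]

/-- For a C² map `φ` on an open set `U` whose Jacobian is invertible with
positive determinant, and a C¹ vector field `h`, one has
`trace( D[Dφ h](x) ∘ (Dφ x)⁻¹ ) = h(x) ⬝ ∇ log det Dφ(x) + div h(x)`. -/
theorem stmt_12 {d : ℕ} (U : Set (Euc d)) (hU : IsOpen U)
    (φ : Euc d → Euc d) (hφ : ContDiffOn ℝ 2 φ U)
    (hdet : ∀ x ∈ U, IsUnit (fderiv ℝ φ x) ∧ 0 < (fderiv ℝ φ x).det)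
    (h : Euc d → Euc d) (hh : ContDiffOn ℝ 1 h U) :
    ∀ x ∈ U,
      LinearMap.trace ℝ (Euc d)
        (((fderiv ℝ (fun y => fderiv ℝ φ y (h y)) x).comp
            (fderiv ℝ φ x).inverse : Euc d →L[ℝ] Euc d) : Euc d →ₗ[ℝ] Euc d)
        = ⟪h x, gradient (fun y => Real.log ((fderiv ℝ φ y).det)) x⟫ + divg h x := by
  intro x hx
  have hUx : U ∈ 𝓝 x := hU.mem_nhds hx
  have hφx : ContDiffAt ℝ 2 φ x := hφ.contDiffAt hUx
  have hA1 : ContDiffAt ℝ 1 (fun y => fderiv ℝ φ y) x := by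
    have := hφx.fderiv_right (m := 1) (by norm_num)
    exact this
  have hA : HasFDerivAt (fun y => fderiv ℝ φ y) (fderiv ℝ (fun y => fderiv ℝ φ y) x) x :=
    (hA1.differentiableAt one_ne_zero).hasFDerivAt
  set A' := fderiv ℝ (fun y => fderiv ℝ φ y) x with hA'def
  have hsymm : ∀ v w, A' v w = A' w v := fun v w => (hφx.isSymmSndFDerivAt (by norm_num)) v w
  have hhx : DifferentiableAt ℝ h x := (hh.contDiffAt hUx).differentiableAt one_ne_zero
  have hF : HasFDerivAt (fun y => fderiv ℝ φ y (h y))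
      ((fderiv ℝ φ x).comp (fderiv ℝ h x) + A'.flip (h x)) x := hA.clm_apply hhx.hasFDerivAt
  obtain ⟨hunit, hpos⟩ := hdet x hx
  set Ainv := (fderiv ℝ φ x).inverse with hAinvdef
  have hinv_comp : Ainv.comp (fderiv ℝ φ x) = ContinuousLinearMap.id ℝ (Euc d) := by
    rw [hAinvdef, ← ContinuousLinearMap.ringInverse_eq_inverse]
    exact Ring.inverse_mul_cancel _ hunit
  -- gradient computation
  set Mx := Matrix.of (TCL d (fderiv ℝ φ x)) with hMx
  have hdetMx : Mx.det = (fderiv ℝ φ x).det := det_TCL d _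
  have hdetMx_pos : 0 < Mx.det := by rw [hdetMx]; exact hpos
  have hg : HasFDerivAt (fun y => Real.log ((fderiv ℝ φ y).det))
      ((Mx.det)⁻¹ • (((detCM d).linearDeriv (TCL d (fderiv ℝ φ x))).comp
        ((TCL d).comp A'))) x := by
    have h1 : HasFDerivAt (fun y => TCL d (fderiv ℝ φ y)) ((TCL d).comp A') x :=
      (TCL d).hasFDerivAt.comp x hA
    have h2 : HasFDerivAt (fun m : Fin d → Fin d → ℝ => Matrix.det (Matrix.of m))
        ((detCM d).linearDeriv (TCL d (fderiv ℝ φ x))) (TCL d (fderiv ℝ φ x)) :=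
      hasFDerivAt_detfun _
    have h3 : HasFDerivAt (fun y => Matrix.det (Matrix.of (TCL d (fderiv ℝ φ y))))
        (((detCM d).linearDeriv (TCL d (fderiv ℝ φ x))).comp ((TCL d).comp A')) x :=
      h2.comp x h1
    have h4 := (Real.hasDerivAt_log (ne_of_gt hdetMx_pos)).comp_hasFDerivAt x h3
    have heq : (fun y => Real.log ((fderiv ℝ φ y).det))
        = fun y => Real.log (Matrix.det (Matrix.of (TCL d (fderiv ℝ φ y)))) := by
      funext y; rw [det_TCL]
    rw [heq]
    exact h4
  -- value of the gradient term
  have hgrad : ⟪h x, gradient (fun y => Real.log ((fderiv ℝ φ y).det)) x⟫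
      = (Mx.det)⁻¹ * ((detCM d).linearDeriv (TCL d (fderiv ℝ φ x))) (TCL d (A' (h x))) := by
    rw [real_inner_comm, gradient, hg.fderiv]
    rw [InnerProductSpace.toDual_symm_apply]
    simp
  -- matrix form of A' (h x)
  have hBx : Matrix.of (TCL d (A' (h x))) = LinearMap.toMatrix (bEuc d) (bEuc d)
      (↑(A' (h x)) : Euc d →ₗ[ℝ] Euc d) := of_TCL d _
  have hMinv : (LinearMap.toMatrix (bEuc d) (bEuc d) (↑Ainv : Euc d →ₗ[ℝ] Euc d)) = Mx⁻¹ := by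
    symm
    apply Matrix.inv_eq_left_inv
    rw [hMx, of_TCL, ← LinearMap.toMatrix_comp (bEuc d) (bEuc d) (bEuc d),
      ← ContinuousLinearMap.toLinearMap_comp, hinv_comp]
    simp
  have htau : (Mx.det)⁻¹ * ((detCM d).linearDeriv (TCL d (fderiv ℝ φ x))) (TCL d (A' (h x)))
      = LinearMap.trace ℝ (Euc d) (↑(Ainv.comp (A' (h x))) : Euc d →ₗ[ℝ] Euc d) := by
    rw [linearDeriv_det_apply]
    rw [show (∑ i, ((Matrix.of (TCL d (fderiv ℝ φ x))).updateRow i (TCL d (A' (h x)) i)).det)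
        = (Mx.adjugate * Matrix.of (TCL d (A' (h x)))).trace from
        sum_det_updateRow Mx (Matrix.of (TCL d (A' (h x))))]
    rw [LinearMap.trace_eq_matrix_trace ℝ (bEuc d), ContinuousLinearMap.toLinearMap_comp,
      LinearMap.toMatrix_comp (bEuc d) (bEuc d) (bEuc d), hMinv, ← hBx,
      Matrix.inv_def, Matrix.smul_mul, Matrix.trace_smul, Ring.inverse_eq_inv', smul_eq_mul]
  -- left-hand side
  have ht1 : LinearMap.trace ℝ (Euc d)
      (↑(((fderiv ℝ φ x).comp (fderiv ℝ h x)).comp Ainv) : Euc d →ₗ[ℝ] Euc d) = divg h x := by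
    rw [ContinuousLinearMap.toLinearMap_comp, LinearMap.trace_comp_comm', ← ContinuousLinearMap.toLinearMap_comp,
      ← ContinuousLinearMap.comp_assoc, hinv_comp, ContinuousLinearMap.id_comp]
    rfl
  have hflip : (A'.flip (h x)).comp Ainv = (A' (h x)).comp Ainv := by
    ext v
    simp only [ContinuousLinearMap.comp_apply, ContinuousLinearMap.flip_apply]
    rw [hsymm]
  have ht2 : LinearMap.trace ℝ (Euc d)
      (↑((A'.flip (h x)).comp Ainv) : Euc d →ₗ[ℝ] Euc d)
      = LinearMap.trace ℝ (Euc d) (↑(Ainv.comp (A' (h x))) : Euc d →ₗ[ℝ] Euc d) := by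
    rw [hflip, ContinuousLinearMap.toLinearMap_comp, LinearMap.trace_comp_comm',
      ← ContinuousLinearMap.toLinearMap_comp]
  rw [hgrad, htau, hF.fderiv, ContinuousLinearMap.add_comp, ContinuousLinearMap.toLinearMap_add, map_add,
    ht1, ht2, add_comm]
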